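/- Let A be a square matrix over ℝ with strictly dominant eigenvalue α > 1, second largest eigenvalue absolute value |γ|, and limit matrix A∞ = lim (α^{-1}A)^n. Then for all indices u, v, the entry A^n[u,v] equals A∞[u,v]·α^n + O(n^d |γ|^n), where d is the dimension of A. -/

import Mathlib

open Matrix Polynomial Filter

private def coefAux (lam : ℕ → ℂ) : ℕ → ℕ → ℂ
  | 0, k => if k = 0 then 1 else 0
  | n+1, k => lam k * coefAux lam n k + (if k = 0 then 0 else coefAux lam n (k-1))

private lemma coefAux_bound (lam : ℕ → ℂ) (g : ℝ) (hg : 0 ≤ g)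
    (hlam : ∀ i, ‖lam i‖ ≤ g) : ∀ n k, ‖coefAux lam n k‖ ≤ (n.choose k) * g ^ (n - k) := by
  intro n
  induction n with
  | zero =>
    intro k
    rcases k with _ | k <;> simp [coefAux]
  | succ n ih =>
    intro k
    rcases k with _ | j
    · have : coefAux lam (n+1) 0 = lam 0 * coefAux lam n 0 := by simp [coefAux]
      rw [this]
      calc ‖lam 0 * coefAux lam n 0‖ ≤ g * ((n.choose 0) * g ^ (n - 0)) := by
            rw [norm_mul]
            exact mul_le_mul (hlam 0) (ih 0) (norm_nonneg _) hg
        _ = ((n+1).choose 0) * g ^ (n + 1 - 0) := by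
            simp [pow_succ]; ring
    · have hrw : coefAux lam (n+1) (j+1) = lam (j+1) * coefAux lam n (j+1) + coefAux lam n j := by
        simp [coefAux]
      rw [hrw]
      have h1 : ‖lam (j+1) * coefAux lam n (j+1)‖ ≤ g * ((n.choose (j+1)) * g ^ (n - (j+1))) := by
        rw [norm_mul]
        exact mul_le_mul (hlam _) (ih _) (norm_nonneg _) hg
      have h2 := ih j
      have hnj : n - j = (n + 1) - (j + 1) := by omega
      rcases Nat.lt_or_ge n (j+1) with hk | hk
      · -- k > n : first term is zero since coefAux lam n (j+1) = 0
        have hz : coefAux lam n (j+1) = 0 := by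
          have := ih (j+1)
          rw [Nat.choose_eq_zero_of_lt hk] at this
          simpa using norm_le_zero_iff.mp (by simpa using this)
        rw [hz, mul_zero, zero_add]
        calc ‖coefAux lam n j‖ ≤ (n.choose j) * g ^ (n - j) := h2
          _ ≤ ((n+1).choose (j+1)) * g ^ (n + 1 - (j+1)) := by
              rw [← hnj, Nat.choose_succ_succ]
              have : (n.choose j : ℝ) ≤ (n.choose j : ℝ) + (n.choose (j+1) : ℝ) := by
                have : (0:ℝ) ≤ (n.choose (j+1) : ℝ) := by positivity
                linarith
              exact mul_le_mul_of_nonneg_right (by push_cast at this ⊢; linarith) (pow_nonneg hg _)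
      · have hpow : g * g ^ (n - (j+1)) = g ^ (n - j) := by
          rw [← pow_succ']
          congr 1
          omega
        calc ‖lam (j+1) * coefAux lam n (j+1) + coefAux lam n j‖
            ≤ g * ((n.choose (j+1)) * g ^ (n - (j+1))) + (n.choose j) * g ^ (n - j) :=
              le_trans (norm_add_le _ _) (add_le_add h1 h2)
          _ = ((n.choose (j+1)) + (n.choose j)) * g ^ (n + 1 - (j+1)) := by
              rw [← hnj, ← hpow]; ring
          _ = ((n+1).choose (j+1)) * g ^ (n + 1 - (j+1)) := by
              rw [Nat.choose_succ_succ]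
              push_cast; ring

private lemma pow_eq_sum_coefAux {R : Type*} [Ring R] [Algebra ℂ R] (B : R) (lam : ℕ → ℂ)
    (π : ℕ → R) (d : ℕ) (hd : 0 < d) (hπ0 : π 0 = 1) (hπd : π d = 0)
    (hstep : ∀ k, k < d → B * π k = π (k+1) + lam k • π k) :
    ∀ n, B ^ n = ∑ k ∈ Finset.range d, coefAux lam n k • π k := by
  intro n
  induction n with
  | zero =>
    have : ∀ k ∈ Finset.range d, coefAux lam 0 k • π k = if k = 0 then π 0 else 0 := by
      intro k _
      rcases k with _ | k <;> simp [coefAux]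
    rw [pow_zero, Finset.sum_congr rfl this, Finset.sum_ite_eq' (Finset.range d) 0 (fun _ => π 0)]
    simp [hd, hπ0]
  | succ n ih =>
    obtain ⟨m, rfl⟩ : ∃ m, d = m + 1 := ⟨d - 1, by omega⟩
    rw [pow_succ', ih, Finset.mul_sum]
    have hterm : ∀ k ∈ Finset.range (m+1), B * (coefAux lam n k • π k)
        = coefAux lam n k • π (k+1) + (lam k * coefAux lam n k) • π k := by
      intro k hk
      rw [mul_smul_comm, hstep k (Finset.mem_range.mp hk), smul_add, smul_smul, mul_comm (coefAux lam n k)]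
    rw [Finset.sum_congr rfl hterm, Finset.sum_add_distrib]
    have h1 : ∑ k ∈ Finset.range (m+1), coefAux lam n k • π (k+1)
        = ∑ k ∈ Finset.range (m+1), (if k = 0 then 0 else coefAux lam n (k-1)) • π k := by
      rw [Finset.sum_range_succ, hπd, smul_zero, add_zero, Finset.sum_range_succ']
      simp
    rw [h1, ← Finset.sum_add_distrib]
    apply Finset.sum_congr rfl
    intro k _
    rw [← add_smul]
    rcases k with _ | k <;> simp [coefAux] <;> ring_nf

private lemma limits_facts (d : ℕ) (A : Matrix (Fin d) (Fin d) ℝ) (α : ℝ) (hα : 1 < α)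
    (Ainf : Matrix (Fin d) (Fin d) ℝ)
    (hlim : Filter.Tendsto (fun n : ℕ => (α⁻¹ • A) ^ n) Filter.atTop (nhds Ainf)) :
    Ainf * Ainf = Ainf ∧ A * Ainf = α • Ainf ∧ Ainf * A = α • Ainf := by
  have hαne : α ≠ 0 := ne_of_gt (lt_trans one_pos hα)
  have hidem : Ainf * Ainf = Ainf := by
    have h1 : Tendsto (fun n : ℕ => (α⁻¹ • A)^n * (α⁻¹ • A)^n) atTop (nhds (Ainf * Ainf)) :=
      hlim.mul hlim
    have h2 : Tendsto (fun n : ℕ => (α⁻¹ • A)^(n+n)) atTop (nhds Ainf) :=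
      hlim.comp (Filter.tendsto_atTop_mono (fun n => Nat.le_add_left n n) Filter.tendsto_id)
    refine tendsto_nhds_unique ?_ h2
    simpa [pow_add] using h1
  have h2 : Tendsto (fun n : ℕ => (α⁻¹ • A)^(n+1)) atTop (nhds Ainf) :=
    hlim.comp (tendsto_add_atTop_nat 1)
  have hl : A * Ainf = α • Ainf := by
    have h1 : Tendsto (fun n : ℕ => (α⁻¹ • A) * (α⁻¹ • A)^n) atTop (nhds ((α⁻¹ • A) * Ainf)) :=
      tendsto_const_nhds.mul hlim
    have h3 : (α⁻¹ • A) * Ainf = Ainf := by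
      refine tendsto_nhds_unique ?_ h2
      simpa [pow_succ'] using h1
    calc A * Ainf = α • ((α⁻¹ • A) * Ainf) := by
          rw [Matrix.smul_mul, smul_smul, mul_inv_cancel₀ hαne, one_smul]
      _ = α • Ainf := by rw [h3]
  have hr : Ainf * A = α • Ainf := by
    have h1 : Tendsto (fun n : ℕ => (α⁻¹ • A)^n * (α⁻¹ • A)) atTop (nhds (Ainf * (α⁻¹ • A))) :=
      hlim.mul tendsto_const_nhds
    have h3 : Ainf * (α⁻¹ • A) = Ainf := by
      refine tendsto_nhds_unique ?_ h2
      simpa [pow_succ] using h1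
    calc Ainf * A = α • (Ainf * (α⁻¹ • A)) := by
          rw [Matrix.mul_smul, smul_smul, mul_inv_cancel₀ hαne, one_smul]
      _ = α • Ainf := by rw [h3]
  exact ⟨hidem, hl, hr⟩

private lemma B_facts (d : ℕ) (A Ainf : Matrix (Fin d) (Fin d) ℝ) (α : ℝ)
    (hidem : Ainf * Ainf = Ainf) (hl : A * Ainf = α • Ainf) (hr : Ainf * A = α • Ainf) :
    (∀ n : ℕ, (A - α • Ainf) ^ (n+1) = A ^ (n+1) - α ^ (n+1) • Ainf)
    ∧ (∀ f : ℝ[X], aeval A f = aeval (A - α • Ainf) f + (f.eval α - f.eval 0) • Ainf) := by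
  set B := A - α • Ainf with hBdef
  have hpowA : ∀ n : ℕ, A ^ n * Ainf = α ^ n • Ainf := by
    intro n
    induction n with
    | zero => simp
    | succ n ih =>
      rw [pow_succ', mul_assoc, ih, Matrix.mul_smul, hl, smul_smul, pow_succ, mul_comm]
  have hB : ∀ n : ℕ, B ^ (n+1) = A ^ (n+1) - α ^ (n+1) • Ainf := by
    intro n
    induction n with
    | zero => simp [hBdef]
    | succ n ih =>
      have e1 : A ^ (n+1) * (α • Ainf) = α ^ (n+2) • Ainf := by
        rw [Matrix.mul_smul, hpowA, smul_smul, ← pow_succ']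
      have e2 : (α ^ (n+1) • Ainf) * A = α ^ (n+2) • Ainf := by
        rw [Matrix.smul_mul, hr, smul_smul, ← pow_succ]
      have e3 : (α ^ (n+1) • Ainf) * (α • Ainf) = α ^ (n+2) • Ainf := by
        rw [Matrix.smul_mul, Matrix.mul_smul, hidem, smul_smul, ← pow_succ]
      calc B ^ (n+2) = B ^ (n+1) * B := by rw [pow_succ]
        _ = (A ^ (n+1) - α ^ (n+1) • Ainf) * (A - α • Ainf) := by rw [ih, hBdef]
        _ = A ^ (n+1) * A - A ^ (n+1) * (α • Ainf) - ((α ^ (n+1) • Ainf) * A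
              - (α ^ (n+1) • Ainf) * (α • Ainf)) := by rw [sub_mul, mul_sub, mul_sub]
        _ = A ^ (n+2) - α ^ (n+2) • Ainf := by
            rw [e1, e2, e3, ← pow_succ]; abel
  refine ⟨hB, ?_⟩
  intro f
  induction f using Polynomial.induction_on' with
  | add p q hp hq =>
    simp only [map_add, eval_add]
    rw [hp, hq]
    have : (eval α p + eval α q - (eval 0 p + eval 0 q))
        = (eval α p - eval 0 p) + (eval α q - eval 0 q) := by ring
    rw [this, add_smul]
    abel
  | monomial n a =>
    rw [aeval_monomial, aeval_monomial, eval_monomial, eval_monomial]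
    rcases n with _ | n
    · simp
    · rw [hB n, mul_sub]
      simp only [zero_pow (Nat.succ_ne_zero n), mul_zero, sub_zero]
      rw [Matrix.mul_smul, ← Algebra.smul_def, ← Algebra.smul_def, smul_smul,
        mul_comm (α ^ (n+1)) a, sub_add_cancel]

private lemma qB_zero (d : ℕ) (A Ainf : Matrix (Fin d) (Fin d) ℝ) (α : ℝ) (hαne : α ≠ 0)
    (hlim : Filter.Tendsto (fun n : ℕ => (α⁻¹ • A) ^ n) Filter.atTop (nhds Ainf))
    (hidem : Ainf * Ainf = Ainf) (hl : A * Ainf = α • Ainf) (hr : Ainf * A = α • Ainf)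
    (hB : ∀ n : ℕ, (A - α • Ainf) ^ (n+1) = A ^ (n+1) - α ^ (n+1) • Ainf)
    (haev : ∀ f : ℝ[X], aeval A f = aeval (A - α • Ainf) f + (f.eval α - f.eval 0) • Ainf)
    (q : ℝ[X]) (hq : A.charpoly = (X - C α) * q) (hqα : A.charpoly.eval α = 0) :
    aeval (A - α • Ainf) q * (A - α • Ainf) = 0 := by
  set B := A - α • Ainf with hBdef
  set M := aeval B q * B with hMdef
  have hAinfB : Ainf * B = 0 := by
    rw [hBdef, Matrix.mul_sub, hr, Matrix.mul_smul, hidem, sub_self]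
  have hpB : aeval B A.charpoly = (A.charpoly.eval 0) • Ainf := by
    have h0 := haev A.charpoly
    rw [Matrix.aeval_self_charpoly, hqα, zero_sub, neg_smul] at h0
    exact add_neg_eq_zero.mp h0.symm
  clear_value B
  have hcomm : B * aeval B q = aeval B q * B := by
    calc B * aeval B q = aeval B (X * q) := by rw [_root_.map_mul, aeval_X]
      _ = aeval B (q * X) := by rw [mul_comm]
      _ = aeval B q * B := by rw [_root_.map_mul, aeval_X]
  have hBM : B * M = α • M := by
    have h1 : (B - algebraMap ℝ _ α) * aeval B q = (A.charpoly.eval 0) • Ainf := by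
      rw [← hpB, hq, _root_.map_mul, map_sub, aeval_X, aeval_C]
    have h2 : ((B - algebraMap ℝ _ α) * aeval B q) * B = 0 := by
      rw [h1, Matrix.smul_mul, hAinfB, smul_zero]
    have h3 : B * M - α • M = 0 := by
      rw [hMdef, ← h2, sub_mul, sub_mul, mul_assoc, ← mul_assoc B, hcomm, mul_assoc,
        Algebra.smul_def, mul_assoc]
    linear_combination (norm := abel) h3
  have hBnM : ∀ n : ℕ, B ^ n * M = α ^ n • M := by
    intro n
    induction n with
    | zero => simp
    | succ n ih =>
      rw [pow_succ', mul_assoc, ih, Matrix.mul_smul, hBM, smul_smul, pow_succ, mul_comm]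
  have htend0 : Tendsto (fun n : ℕ => (α⁻¹) ^ (n+1) • B ^ (n+1)) atTop (nhds 0) := by
    have heq : ∀ n : ℕ, (α⁻¹) ^ (n+1) • B ^ (n+1) = (α⁻¹ • A) ^ (n+1) - Ainf := by
      intro n
      rw [hB n, smul_sub, smul_smul, ← mul_pow, inv_mul_cancel₀ hαne, one_pow, one_smul,
        _root_.smul_pow]
    simp only [heq]
    have := (hlim.comp (tendsto_add_atTop_nat 1)).sub (tendsto_const_nhds (x := Ainf))
    simpa using this
  have hconst : Tendsto (fun _ : ℕ => M) atTop (nhds (0 * M)) := by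
    have h4 : ∀ n : ℕ, ((α⁻¹) ^ (n+1) • B ^ (n+1)) * M = M := by
      intro n
      rw [Matrix.smul_mul, hBnM, smul_smul, ← mul_pow, inv_mul_cancel₀ hαne, one_pow, one_smul]
    have := htend0.mul (tendsto_const_nhds (x := M))
    simpa only [h4] using this
  calc M = 0 * M := (tendsto_nhds_unique hconst tendsto_const_nhds).symm
    _ = 0 := zero_mul M

-- extraction of q and root list
private lemma charpoly_fact (d : ℕ) (hd : 0 < d) (A : Matrix (Fin d) (Fin d) ℝ) (α γ : ℝ)
    (hsimple : ((A.charpoly.map (algebraMap ℝ ℂ)).roots.count (α : ℂ)) = 1)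
    (hdom : ∀ z ∈ (A.charpoly.map (algebraMap ℝ ℂ)).roots, z ≠ (α : ℂ) → ‖z‖ ≤ |γ|) :
    ∃ q : ℝ[X], A.charpoly = (X - C α) * q ∧ A.charpoly.eval α = 0 ∧ ∃ L : List ℂ,
      L.length = d ∧ (∀ r ∈ L, ‖r‖ ≤ |γ|) ∧
      (L.map fun r => X - C r).prod = (q * X).map (algebraMap ℝ ℂ) := by
  set p := A.charpoly with hpdef
  have hpmonic : p.Monic := A.charpoly_monic
  have hpCmonic : (p.map (algebraMap ℝ ℂ)).Monic := hpmonic.map _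
  have hpCne : p.map (algebraMap ℝ ℂ) ≠ 0 := hpCmonic.ne_zero
  have hmem : (α : ℂ) ∈ (p.map (algebraMap ℝ ℂ)).roots := by
    rw [← Multiset.count_pos, hsimple]; norm_num
  have hevalC : (p.map (algebraMap ℝ ℂ)).eval (α : ℂ) = 0 := (mem_roots hpCne).mp hmem
  have hevalα : p.eval α = 0 := by
    have h5 : (algebraMap ℝ ℂ) (p.eval α) = 0 := by
      rw [← eval₂_at_apply, ← eval_map]
      rw [show (algebraMap ℝ ℂ) α = (α : ℂ) from rfl, hevalC]
    rwa [show (algebraMap ℝ ℂ) (p.eval α) = ((p.eval α : ℝ) : ℂ) from rfl,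
      Complex.ofReal_eq_zero] at h5
  obtain ⟨q, hq⟩ : (X - C α) ∣ p := dvd_iff_isRoot.mpr hevalα
  have hqmonic : q.Monic := (monic_X_sub_C α).of_mul_monic_left (hq ▸ hpmonic)
  have hdeg : p.natDegree = d := by
    rw [hpdef, A.charpoly_natDegree_eq_dim, Fintype.card_fin]
  have hqdeg : q.natDegree = d - 1 := by
    have := hq ▸ hdeg
    rw [natDegree_mul (X_sub_C_ne_zero α) hqmonic.ne_zero, natDegree_X_sub_C] at this
    omega
  set s : ℝ[X] := q * X with hsdef
  have hsmonic : s.Monic := hqmonic.mul monic_X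
  have hsdeg : s.natDegree = d := by
    rw [hsdef, natDegree_mul hqmonic.ne_zero X_ne_zero, natDegree_X, hqdeg]; omega
  set sC := s.map (algebraMap ℝ ℂ) with hsCdef
  have hsCmonic : sC.Monic := hsmonic.map _
  have hsplit : Splits sC := IsAlgClosed.splits sC
  have hcard : Multiset.card sC.roots = d := by
    rw [splits_iff_card_roots.mp hsplit, natDegree_map, hsdeg]
  have hprod : sC = (sC.roots.map fun a => X - C a).prod :=
    hsplit.eq_prod_roots_of_monic hsCmonic
  refine ⟨q, hq, hevalα, sC.roots.toList, by rw [Multiset.length_toList, hcard], ?_, ?_⟩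
  · intro r hr
    rw [Multiset.mem_toList] at hr
    have hsC : sC = (q.map (algebraMap ℝ ℂ)) * X := by
      rw [hsCdef, hsdef, Polynomial.map_mul, map_X]
    have hqCne : q.map (algebraMap ℝ ℂ) ≠ 0 := (hqmonic.map _).ne_zero
    rw [hsC, roots_mul (by rw [← hsC]; exact hsCmonic.ne_zero), roots_X] at hr
    rcases Multiset.mem_add.mp hr with hr | hr
    · -- r is a root of qC
      have hpC : p.map (algebraMap ℝ ℂ) = (X - C (α : ℂ)) * q.map (algebraMap ℝ ℂ) := by
        rw [hq, Polynomial.map_mul, Polynomial.map_sub, map_X, map_C]; rfl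
      have hrp : r ∈ (p.map (algebraMap ℝ ℂ)).roots := by
        rw [hpC, roots_mul (by rw [← hpC]; exact hpCne), roots_X_sub_C]
        exact Multiset.mem_add.mpr (Or.inr hr)
      have hrne : r ≠ (α : ℂ) := by
        intro h
        have hcount : ((p.map (algebraMap ℝ ℂ)).roots.count (α : ℂ)) =
            1 + ((q.map (algebraMap ℝ ℂ)).roots.count (α : ℂ)) := by
          rw [hpC, roots_mul (by rw [← hpC]; exact hpCne), roots_X_sub_C,
            Multiset.count_add, Multiset.count_singleton_self]
        rw [hsimple] at hcount
        have : ((q.map (algebraMap ℝ ℂ)).roots.count (α : ℂ)) = 0 := by omega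
        rw [h] at hr
        exact absurd (Multiset.count_pos.mpr hr) (by omega)
      exact hdom r hrp hrne
    · simp only [Multiset.mem_singleton] at hr
      rw [hr, norm_zero]
      exact abs_nonneg γ
  · show _ = sC
    calc (List.map (fun r => X - C r) sC.roots.toList).prod
        = (Multiset.map (fun a => X - C a) (↑sC.roots.toList : Multiset ℂ)).prod := by
          rw [Multiset.map_coe, Multiset.prod_coe]
      _ = (Multiset.map (fun a => X - C a) sC.roots).prod := by rw [Multiset.coe_toList]
      _ = sC := hprod.symm

private lemma entry_bigO (d : ℕ) (hd : 0 < d) (B : Matrix (Fin d) (Fin d) ℝ) (q : ℝ[X]) (g : ℝ) (hg : 0 ≤ g)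
    (hqB : aeval B (q * X) = 0) (L : List ℂ) (hlen : L.length = d)
    (hLg : ∀ r ∈ L, ‖r‖ ≤ g)
    (hLprod : (L.map fun r => X - C r).prod = (q * X).map (algebraMap ℝ ℂ)) (u v : Fin d) :
    Asymptotics.IsBigO atTop (fun n : ℕ => (B ^ n) u v) (fun n : ℕ => (n:ℝ)^d * g^n) := by
  set F : Matrix (Fin d) (Fin d) ℝ →ₐ[ℝ] Matrix (Fin d) (Fin d) ℂ :=
    AlgHom.mapMatrix Complex.ofRealAm with hFdef
  set Bc := F B with hBcdef
  have hBc0 : aeval Bc ((q * X).map (algebraMap ℝ ℂ)) = 0 := by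
    rw [aeval_map_algebraMap, aeval_algHom_apply, hqB, map_zero]
  set lam : ℕ → ℂ := fun k => L.getD k 0 with hlamdef
  set π : ℕ → Matrix (Fin d) (Fin d) ℂ :=
    fun k => aeval Bc ((L.take k).map fun r => X - C r).prod with hπdef
  have hπ0 : π 0 = 1 := by simp [hπdef]
  have hπd : π d = 0 := by
    have ht : L.take d = L := by rw [← hlen]; exact List.take_length
    rw [hπdef]
    simp only
    rw [ht, hLprod, hBc0]
  have hstep : ∀ k, k < d → Bc * π k = π (k+1) + lam k • π k := by
    intro k hk
    have hk' : k < L.length := by omega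
    have htake : L.take (k+1) = L.take k ++ [lam k] := by
      have h1 : lam k = L[k] := List.getD_eq_getElem L 0 hk'
      rw [List.take_succ, List.getElem?_eq_getElem hk', h1]
      rfl
    have hπs : π (k+1) = π k * (Bc - algebraMap ℂ _ (lam k)) := by
      rw [hπdef]
      simp only
      rw [htake, List.map_append, List.prod_append, List.map_singleton, List.prod_singleton,
        _root_.map_mul, map_sub, aeval_X, aeval_C]
    have hcomm : π k * Bc = Bc * π k := by
      have h1 : ∀ f : ℂ[X], aeval Bc f * Bc = Bc * aeval Bc f := by
        intro f
        calc aeval Bc f * Bc = aeval Bc (f * X) := by rw [_root_.map_mul, aeval_X]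
          _ = aeval Bc (X * f) := by rw [mul_comm]
          _ = Bc * aeval Bc f := by rw [_root_.map_mul, aeval_X]
      exact h1 _
    rw [hπs, mul_sub, hcomm, ← Algebra.commutes (lam k) (π k), ← Algebra.smul_def,
      sub_add_cancel]
  have key := pow_eq_sum_coefAux Bc lam π d hd hπ0 hπd hstep
  have hlam_bd : ∀ i, ‖lam i‖ ≤ g := by
    intro i
    rcases Nat.lt_or_ge i L.length with hi | hi
    · have h1 : lam i = L[i] := List.getD_eq_getElem L 0 hi
      rw [h1]
      exact hLg _ (List.getElem_mem hi)
    · rw [hlamdef]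
      simp only
      rw [List.getD_eq_default _ _ hi]
      simpa using hg
  have hcoef := coefAux_bound lam g hg hlam_bd
  -- entry bound
  have hentry : ∀ n : ℕ, ‖(B ^ n) u v‖ ≤
      ∑ k ∈ Finset.range d, (n.choose k) * g ^ (n - k) * ‖π k u v‖ := by
    intro n
    have h1 : ((B ^ n) u v : ℂ) = (Bc ^ n) u v := by
      rw [hBcdef, ← _root_.map_pow, AlgHom.mapMatrix_apply, Matrix.map_apply]
      rfl
    have h2 : ‖(B ^ n) u v‖ = ‖(Bc ^ n) u v‖ := by
      rw [← h1, Complex.norm_real]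
    rw [h2, key n]
    calc ‖(∑ k ∈ Finset.range d, coefAux lam n k • π k) u v‖
        = ‖∑ k ∈ Finset.range d, coefAux lam n k * π k u v‖ := by
          simp [Matrix.sum_apply, Matrix.smul_apply, smul_eq_mul]
      _ ≤ ∑ k ∈ Finset.range d, ‖coefAux lam n k * π k u v‖ := norm_sum_le _ _
      _ ≤ ∑ k ∈ Finset.range d, (n.choose k) * g ^ (n - k) * ‖π k u v‖ := by
          refine Finset.sum_le_sum fun k _ => ?_
          rw [norm_mul]
          exact mul_le_mul_of_nonneg_right (hcoef n k) (norm_nonneg _)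
  -- assemble IsBigO
  rw [Asymptotics.isBigO_iff]
  set m := max 1 g⁻¹ with hmdef
  have hm1 : (1:ℝ) ≤ m := le_max_left _ _
  refine ⟨(∑ k ∈ Finset.range d, ‖π k u v‖) * m ^ d, ?_⟩
  filter_upwards [eventually_ge_atTop (d+1)] with n hn
  have hn1 : 1 ≤ n := by omega
  have hpow_bd : ∀ k, k < d → g ^ (n - k) ≤ g ^ n * m ^ d := by
    intro k hk
    rcases eq_or_lt_of_le hg with h0 | h0
    · have : n - k ≠ 0 := by omega
      rw [← h0, zero_pow this, zero_pow (by omega : n ≠ 0), zero_mul]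
    · have e1 : g ^ (n - k) = g ^ n * (g⁻¹) ^ k := by
        have h2 : g ^ (n - k) * g ^ k = g ^ n := by rw [← pow_add]; congr 1; omega
        have h3 : (g:ℝ) ^ k ≠ 0 := pow_ne_zero k (ne_of_gt h0)
        rw [inv_pow, ← h2]
        field_simp
      rw [e1]
      refine mul_le_mul_of_nonneg_left ?_ (pow_nonneg hg n)
      calc (g⁻¹) ^ k ≤ m ^ k := pow_le_pow_left₀ (inv_nonneg.mpr hg) (le_max_right 1 g⁻¹) k
        _ ≤ m ^ d := pow_le_pow_right₀ hm1 (by omega)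
  have hchoose : ∀ k, k < d → ((n.choose k : ℝ)) ≤ (n:ℝ) ^ d := by
    intro k hk
    calc ((n.choose k : ℝ)) ≤ ((n ^ k : ℕ) : ℝ) := by exact_mod_cast Nat.choose_le_pow n k
      _ ≤ ((n ^ d : ℕ) : ℝ) := by exact_mod_cast Nat.pow_le_pow_right hn1 (by omega)
      _ = (n:ℝ) ^ d := by push_cast; ring
  calc ‖(B ^ n) u v‖ ≤ ∑ k ∈ Finset.range d, (n.choose k) * g ^ (n - k) * ‖π k u v‖ :=
        hentry n
    _ ≤ ∑ k ∈ Finset.range d, ((n:ℝ) ^ d * (g ^ n * m ^ d)) * ‖π k u v‖ := by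
        refine Finset.sum_le_sum fun k hk => ?_
        have hk' := Finset.mem_range.mp hk
        refine mul_le_mul_of_nonneg_right ?_ (norm_nonneg _)
        exact mul_le_mul (hchoose k hk') (hpow_bd k hk') (pow_nonneg hg _)
          (by positivity)
    _ = (∑ k ∈ Finset.range d, ‖π k u v‖) * m ^ d * ((n:ℝ) ^ d * g ^ n) := by
        rw [← Finset.mul_sum]; ring
    _ ≤ (∑ k ∈ Finset.range d, ‖π k u v‖) * m ^ d * ‖(n:ℝ) ^ d * g ^ n‖ := by
        refine mul_le_mul_of_nonneg_left (le_abs_self _) ?_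
        positivity

/-- If A has strictly dominant eigenvalue α > 1, all other eigenvalues of absolute value
at most |γ|, and limit matrix A∞ = lim (α⁻¹A)^n, then each entry satisfies
A^n[u,v] = A∞[u,v]·αⁿ + O(n^d |γ|ⁿ). -/
theorem stmt13 (d : ℕ) (A : Matrix (Fin d) (Fin d) ℝ) (α γ : ℝ) (hα : 1 < α)
    (hsimple : ((A.charpoly.map (algebraMap ℝ ℂ)).roots.count (α : ℂ)) = 1)
    (hdom : ∀ z ∈ (A.charpoly.map (algebraMap ℝ ℂ)).roots, z ≠ (α : ℂ) → ‖z‖ ≤ |γ|)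
    (Ainf : Matrix (Fin d) (Fin d) ℝ)
    (hlim : Filter.Tendsto (fun n : ℕ => (α⁻¹ • A) ^ n) Filter.atTop (nhds Ainf)) :
    ∀ u v : Fin d,
      Asymptotics.IsBigO Filter.atTop
        (fun n : ℕ => (A ^ n) u v - Ainf u v * α ^ n)
        (fun n : ℕ => (n : ℝ) ^ d * |γ| ^ n) := by
  intro u v
  have hd : 0 < d := u.pos
  have hαne : α ≠ 0 := ne_of_gt (lt_trans one_pos hα)
  obtain ⟨hidem, hl, hr⟩ := limits_facts d A α hα Ainf hlim
  obtain ⟨hBpow, haev⟩ := B_facts d A Ainf α hidem hl hr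
  obtain ⟨q, hq, hevalα, L, hlen, hLg, hLprod⟩ := charpoly_fact d hd A α γ hsimple hdom
  have hqB0 : aeval (A - α • Ainf) q * (A - α • Ainf) = 0 :=
    qB_zero d A Ainf α hαne hlim hidem hl hr hBpow haev q hq hevalα
  have hqX : aeval (A - α • Ainf) (q * X) = 0 := by
    rw [_root_.map_mul, aeval_X, hqB0]
  have hbig := entry_bigO d hd (A - α • Ainf) q |γ| (abs_nonneg γ) hqX L hlen hLg hLprod u v
  refine hbig.congr' ?_ (Filter.EventuallyEq.refl _ _)
  filter_upwards [Filter.eventually_ge_atTop 1] with n hn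
  obtain ⟨m, rfl⟩ : ∃ m, n = m + 1 := ⟨n - 1, by omega⟩
  rw [hBpow m, Matrix.sub_apply, Matrix.smul_apply, smul_eq_mul, mul_comm]
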